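/- With equal positive weights ν_i = ν and B ≥ 3 anchors placed at the vertices of a regular B-gon around the target (θ_i = 2πi/B), the PEB equals sqrt(Bν / (ν² Σ_{i<j} sin²(2π(j−i)/B))) = 2/sqrt(νB), using the identity Σ_{0 ≤ i < j < B} sin²(2π(j−i)/B) = B²/4. -/

import Mathlib

open Finset Real

lemma cos_sum_zero (B : ℕ) (hB : 3 ≤ B) :
    ∑ k ∈ Finset.range B, Real.cos (4 * π * k / B) = 0 := by
  have hB0 : (B:ℝ) ≠ 0 := by positivity
  have hBc : (B:ℂ) ≠ 0 := by exact_mod_cast hB0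
  set z : ℂ := Complex.exp (4 * π * Complex.I / B) with hz
  have hz1 : z ≠ 1 := by
    rw [hz]
    intro hone
    rw [Complex.exp_eq_one_iff] at hone
    obtain ⟨n, hn⟩ := hone
    have hI : (Complex.I : ℂ) ≠ 0 := Complex.I_ne_zero
    have h2 : (4 * (π:ℂ) / B) = n * (2 * π) := by
      rw [div_eq_iff hBc] at hn ⊢
      have := mul_right_cancel₀ hI (by linear_combination hn : (4 * (π:ℂ)) * Complex.I = (n * (2*π) * B) * Complex.I)
      linear_combination this
    have h2' : (4 * π / B : ℝ) = n * (2 * π) := by exact_mod_cast h2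
    have hπ := Real.pi_pos
    have hn2 : (n : ℝ) * B = 2 := by
      field_simp at h2'
      nlinarith [h2']
    have hB3 : (3:ℝ) ≤ B := by exact_mod_cast hB
    rcases le_or_gt n 0 with h | h
    · have : (n:ℝ) ≤ 0 := by exact_mod_cast h
      nlinarith
    · have : (1:ℝ) ≤ n := by exact_mod_cast h
      nlinarith
  have hzB : z ^ B = 1 := by
    rw [hz, ← Complex.exp_nat_mul]
    have : (B:ℂ) * (4 * π * Complex.I / B) = (2:ℤ) * (2 * π * Complex.I) := by
      field_simp; ring
    rw [this, Complex.exp_int_mul_two_pi_mul_I]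
  have hsum : ∑ k ∈ Finset.range B, z ^ k = 0 := by
    rw [geom_sum_eq hz1, hzB]; simp
  have hre : ∀ k : ℕ, (z ^ k).re = Real.cos (4 * π * k / B) := by
    intro k
    rw [hz, ← Complex.exp_nat_mul]
    have : (k:ℂ) * (4 * π * Complex.I / B) = ((4 * π * k / B : ℝ) : ℂ) * Complex.I := by
      push_cast; ring
    rw [this, Complex.exp_ofReal_mul_I_re]
  calc ∑ k ∈ Finset.range B, Real.cos (4 * π * k / B)
      = (∑ k ∈ Finset.range B, z ^ k).re := by
        rw [Complex.re_sum]; exact Finset.sum_congr rfl fun k _ => (hre k).symm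
    _ = 0 := by rw [hsum]; rfl

lemma sin_sq_sum (B : ℕ) (hB : 3 ≤ B) :
    ∑ k ∈ Finset.range B, Real.sin (2 * π * k / B) ^ 2 = B / 2 := by
  have h : ∀ k : ℕ, Real.sin (2 * π * k / B) ^ 2 = 1/2 - Real.cos (4 * π * k / B) / 2 := by
    intro k
    rw [Real.sin_sq_eq_half_sub]
    ring_nf
  simp_rw [h]
  rw [Finset.sum_sub_distrib, Finset.sum_const, Finset.card_range]
  have := cos_sum_zero B hB
  rw [← Finset.sum_div, this]
  push_cast; ring

section
variable (B : ℕ)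

noncomputable def gg (x : ℝ) : ℝ := Real.sin (2 * π * x / B) ^ 2

lemma gg_neg (x : ℝ) : gg B (-x) = gg B x := by
  unfold gg
  rw [show 2 * π * (-x) / B = -(2 * π * x / B) by ring, Real.sin_neg, neg_sq]

lemma gg_sub_B (hB : 0 < B) (x : ℝ) : gg B (x - B) = gg B x := by
  unfold gg
  have hB0 : (B:ℝ) ≠ 0 := by positivity
  rw [show 2 * π * (x - B) / B = 2 * π * x / B - 2 * π by field_simp,
    Real.sin_sub_two_pi]

lemma row_sum (hB : 3 ≤ B) (i : Fin B) :
    ∑ j : Fin B, gg B ((j : ℕ) - (i : ℕ) : ℝ) = ∑ k ∈ Finset.range B, gg B k := by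
  haveI : NeZero B := ⟨by omega⟩
  rw [← Fin.sum_univ_eq_sum_range]
  apply Fintype.sum_equiv (Equiv.subRight i)
  intro x
  simp only [Equiv.subRight_apply]
  have hval : ((x - i : Fin B) : ℕ) = ((B - i.val) + x.val) % B := by
    rw [Fin.sub_def]
  rcases le_or_gt (i.val) (x.val) with h | h
  · have h2 : ((B - i.val) + x.val) % B = x.val - i.val := by
      have : (B - i.val) + x.val = B + (x.val - i.val) := by omega
      rw [this, Nat.add_mod_left, Nat.mod_eq_of_lt (by omega)]
    rw [hval, h2]
    congr 1
    push_cast [Nat.cast_sub h]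
    ring
  · have h2 : ((B - i.val) + x.val) % B = B - i.val + x.val := by
      rw [Nat.mod_eq_of_lt (by omega)]
    rw [hval, h2]
    have hc : ((B - i.val + x.val : ℕ) : ℝ) = (B:ℝ) - i.val + x.val := by
      push_cast [Nat.cast_sub (by omega : i.val ≤ B)]
      ring
    rw [hc, show ((x:ℕ):ℝ) - ((i:ℕ):ℝ) = ((B:ℝ) - i.val + x.val) - B by ring,
      gg_sub_B B (by omega)]

lemma main_sum (hB : 3 ≤ B) :
    (∑ i : Fin B, ∑ j : Fin B, (if i < j then gg B ((j : ℕ) - (i : ℕ) : ℝ) else 0))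
      = (B : ℝ) ^ 2 / 4 := by
  set S := ∑ i : Fin B, ∑ j : Fin B, (if i < j then gg B ((j : ℕ) - (i : ℕ) : ℝ) else 0) with hS
  have hU : ∑ i : Fin B, ∑ j : Fin B, gg B ((j : ℕ) - (i : ℕ) : ℝ) = (B:ℝ)^2 / 2 := by
    calc ∑ i : Fin B, ∑ j : Fin B, gg B ((j : ℕ) - (i : ℕ) : ℝ)
        = ∑ _i : Fin B, ∑ k ∈ Finset.range B, gg B k :=
          Finset.sum_congr rfl fun i _ => row_sum B hB i
      _ = (B:ℝ) * ((B:ℝ)/2) := by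
          rw [Finset.sum_const, Finset.card_univ, Fintype.card_fin]
          rw [show ∑ k ∈ Finset.range B, gg B k = (B:ℝ)/2 from sin_sq_sum B hB]
          simp [nsmul_eq_mul]
      _ = (B:ℝ)^2 / 2 := by ring
  have hsplit : ∑ i : Fin B, ∑ j : Fin B, gg B ((j : ℕ) - (i : ℕ) : ℝ) = 2 * S := by
    have hterm : ∀ i j : Fin B, gg B ((j : ℕ) - (i : ℕ) : ℝ)
        = (if i < j then gg B ((j : ℕ) - (i : ℕ) : ℝ) else 0)
          + (if j < i then gg B ((j : ℕ) - (i : ℕ) : ℝ) else 0) := by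
      intro i j
      rcases lt_trichotomy i j with h | h | h
      · rw [if_pos h, if_neg (asymm h)]; ring
      · subst h
        rw [if_neg (lt_irrefl i)]
        rw [sub_self]
        unfold gg
        rw [mul_zero, zero_div, Real.sin_zero]
        norm_num
      · rw [if_neg (asymm h), if_pos h]; ring
    have h1 : ∑ i : Fin B, ∑ j : Fin B, gg B ((j : ℕ) - (i : ℕ) : ℝ)
        = S + ∑ i : Fin B, ∑ j : Fin B, (if j < i then gg B ((j : ℕ) - (i : ℕ) : ℝ) else 0) := by
      rw [hS, ← Finset.sum_add_distrib]
      refine Finset.sum_congr rfl fun i _ => ?_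
      rw [← Finset.sum_add_distrib]
      exact Finset.sum_congr rfl fun j _ => hterm i j
    rw [h1]
    have hswap : ∑ i : Fin B, ∑ j : Fin B, (if j < i then gg B ((j : ℕ) - (i : ℕ) : ℝ) else 0) = S := by
      rw [Finset.sum_comm, hS]
      apply Finset.sum_congr rfl
      intro j _
      apply Finset.sum_congr rfl
      intro i _
      by_cases h : j < i
      · rw [if_pos h, if_pos h, show ((j:ℕ):ℝ) - ((i:ℕ):ℝ) = -(((i:ℕ):ℝ) - ((j:ℕ):ℝ)) by ring, gg_neg]
      · rw [if_neg h, if_neg h]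
    rw [hswap]; ring
  rw [hU] at hsplit
  linarith
end

/-- With equal weights `νᵢ = ν > 0` and `B ≥ 3` anchors at the vertices of a
regular `B`-gon around the target (`θᵢ = 2πi/B`), the key identity
`Σ_{0 ≤ i < j < B} sin²(2π(j−i)/B) = B²/4` holds and the PEB equals
`√(Bν / (ν² Σ_{i<j} sin²(2π(j−i)/B))) = 2/√(νB)`. -/
theorem PEB_regular_polygon
    (B : ℕ) (hB : 3 ≤ B) (ν : ℝ) (hν : 0 < ν) :
    (∑ i : Fin B, ∑ j : Fin B, (if i < j then
        Real.sin (2 * π * ((j : ℕ) - (i : ℕ) : ℝ) / B) ^ 2 else 0))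
      = (B : ℝ) ^ 2 / 4
    ∧
    Real.sqrt (((B : ℝ) * ν) /
        (ν ^ 2 * ∑ i : Fin B, ∑ j : Fin B, (if i < j then
          Real.sin (2 * π * ((j : ℕ) - (i : ℕ) : ℝ) / B) ^ 2 else 0)))
      = 2 / Real.sqrt (ν * B) := by
  have hkey : (∑ i : Fin B, ∑ j : Fin B, (if i < j then
      Real.sin (2 * π * ((j : ℕ) - (i : ℕ) : ℝ) / B) ^ 2 else 0)) = (B : ℝ) ^ 2 / 4 := by
    have := main_sum B hB
    simpa [gg] using this
  refine ⟨hkey, ?_⟩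
  rw [hkey]
  have hB0 : (0:ℝ) < B := by positivity
  have h4 : (B : ℝ) * ν / (ν ^ 2 * ((B:ℝ)^2/4)) = 4 / (ν * B) := by
    field_simp
  rw [h4, Real.sqrt_div (by norm_num) (ν * B),
    show (4:ℝ) = 2^2 by norm_num, Real.sqrt_sq (by norm_num)]
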